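/- Let K be a real 4×4 orthogonal symplectic matrix, r₁, r₂ ≥ 0, V_in = diag(e^{−2r₁}, e^{2r₁}, e^{−2r₂}, e^{2r₂}), and V = K·V_in·Kᵀ, with upper-left 2×2 block V₁ and lower-right 2×2 block V₂. Let g₁, g₂ be real, G = diag(g₁, g₁, g₂, g₂), and H := (Tr((V·G)²) − Tr(G²))/2. Setting H_sqz(n) := 8n² + 8n, n_in,a := sinh²(r_a), and n_rot,a := (Tr(V_a) − 2)/4, one has H = g₁g₂·(H_sqz(n_in,1) + H_sqz(n_in,2)) + (g₁² − g₁g₂)·H_sqz(n_rot,1) + (g₂² − g₁g₂)·H_sqz(n_rot,2) − (g₁ − g₂)²·(det(V₁) − 1). -/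

import Mathlib

open Matrix

noncomputable section

/-- The 2N×2N symplectic form: N diagonal copies of `J = [[0,1],[-1,0]]`.
Modes are indexed by `Fin N`, each contributing two coordinates indexed by `Fin 2`. -/
def Omega (N : ℕ) : Matrix (Fin N × Fin 2) (Fin N × Fin 2) ℝ :=
  Matrix.of fun p q => if p.1 = q.1 then !![(0 : ℝ), 1; -1, 0] p.2 q.2 else 0

/-- The covariance matrix `diag(e^{−2r₁}, e^{2r₁}, …, e^{−2r_N}, e^{2r_N})` of N independent
squeezed states with squeezing levels `r a`. -/
def VIn {N : ℕ} (r : Fin N → ℝ) : Matrix (Fin N × Fin 2) (Fin N × Fin 2) ℝ :=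
  Matrix.diagonal fun p => Real.exp ((if p.2 = 0 then (-2 : ℝ) else 2) * r p.1)

/-- The a-th diagonal 2×2 block of a 2N×2N matrix. -/
def dblock {N : ℕ} (V : Matrix (Fin N × Fin 2) (Fin N × Fin 2) ℝ) (a : Fin N) :
    Matrix (Fin 2) (Fin 2) ℝ :=
  Matrix.of fun i j => V (a, i) (a, j)

/-- The phase-shift generator `G = diag(g₁, g₁, …, g_N, g_N)`. -/
def Gmat {N : ℕ} (g : Fin N → ℝ) : Matrix (Fin N × Fin 2) (Fin N × Fin 2) ℝ :=
  Matrix.diagonal fun p => g p.1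

/-- The QFI functional `H(V, G) := (Tr((V·G)²) − Tr(G²))/2`. -/
def qfi {N : ℕ} (V G : Matrix (Fin N × Fin 2) (Fin N × Fin 2) ℝ) : ℝ :=
  (Matrix.trace ((V * G) ^ 2) - Matrix.trace (G ^ 2)) / 2

/-- `H_sqz(n) = 8n² + 8n`, the QFI of a single-mode squeezed state of mean photon number n. -/
def Hsqz (n : ℝ) : ℝ := 8 * n ^ 2 + 8 * n

/-- The mean photon number of mode a of a covariance matrix: `(Tr(V_a) − 2)/4`. -/
def photon {N : ℕ} (V : Matrix (Fin N × Fin 2) (Fin N × Fin 2) ℝ) (a : Fin N) : ℝ :=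
  ((dblock V a).trace - 2) / 4

/-- two-mode trade-off formula (Eq. 10 of the paper). For a 4×4 orthogonal
symplectic `K`, `V = K·diag(e^{−2r₁}, e^{2r₁}, e^{−2r₂}, e^{2r₂})·Kᵀ` and
`G = diag(g₁, g₁, g₂, g₂)`, the QFI `H = (Tr((V·G)²) − Tr(G²))/2` satisfies
`H = g₁g₂·(H_sqz(n_in,1) + H_sqz(n_in,2)) + (g₁² − g₁g₂)·H_sqz(n_rot,1)
   + (g₂² − g₁g₂)·H_sqz(n_rot,2) − (g₁ − g₂)²·(det(V₁) − 1)`,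
where `n_in,a = sinh²(r_a)`, `n_rot,a = (Tr(V_a) − 2)/4`, and `det(V₁) − 1 = 1/μ² − 1`. -/
theorem stmt_8 (K : Matrix (Fin 2 × Fin 2) (Fin 2 × Fin 2) ℝ)
    (hKorth : Kᵀ * K = 1) (hKsymp : K * Omega 2 * Kᵀ = Omega 2)
    (r₁ r₂ : ℝ) (hr₁ : 0 ≤ r₁) (hr₂ : 0 ≤ r₂)
    (V : Matrix (Fin 2 × Fin 2) (Fin 2 × Fin 2) ℝ)
    (hVdef : V = K * VIn ![r₁, r₂] * Kᵀ)
    (g₁ g₂ : ℝ) :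
    qfi V (Gmat ![g₁, g₂])
      = g₁ * g₂ * (Hsqz (Real.sinh r₁ ^ 2) + Hsqz (Real.sinh r₂ ^ 2))
        + (g₁ ^ 2 - g₁ * g₂) * Hsqz (photon V 0)
        + (g₂ ^ 2 - g₁ * g₂) * Hsqz (photon V 1)
        - (g₁ - g₂) ^ 2 * ((dblock V 0).det - 1) := by

  -- basic consequences of orthogonality/symplecticity
  have hKKt : K * Kᵀ = 1 := mul_eq_one_comm.mp hKorth
  have hDOD : VIn ![r₁, r₂] * Omega 2 * VIn ![r₁, r₂] = Omega 2 := by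
    ext ⟨a, i⟩ ⟨b, j⟩
    fin_cases a <;> fin_cases b <;> fin_cases i <;> fin_cases j <;>
      simp [VIn, Omega, Matrix.mul_apply, Fin.sum_univ_two, Fintype.sum_prod_type,
        Matrix.diagonal, ← Real.exp_add] <;> simp [Prod.ext_iff]
  have hKOK : Kᵀ * Omega 2 * K = Omega 2 := by
    calc Kᵀ * Omega 2 * K = Kᵀ * (K * Omega 2 * Kᵀ) * K := by rw [hKsymp]
      _ = (Kᵀ * K) * Omega 2 * (Kᵀ * K) := by simp only [Matrix.mul_assoc]
      _ = Omega 2 := by rw [hKorth]; simp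
  have hVOV : V * Omega 2 * V = Omega 2 := by
    rw [hVdef]
    have h1 : K * VIn ![r₁, r₂] * Kᵀ * Omega 2 * (K * VIn ![r₁, r₂] * Kᵀ)
        = K * (VIn ![r₁, r₂] * (Kᵀ * Omega 2 * K) * VIn ![r₁, r₂]) * Kᵀ := by
      simp only [Matrix.mul_assoc]
    rw [h1, hKOK, hDOD, hKsymp]
  have hVsym : Vᵀ = V := by
    rw [hVdef]
    simp [Matrix.transpose_mul, Matrix.transpose_transpose, VIn,
      Matrix.diagonal_transpose, Matrix.mul_assoc]
  have hsymf : ∀ p q : Fin 2 × Fin 2, V q p = V p q := by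
    intro p q
    conv_rhs => rw [← hVsym]
    rfl
  -- trace of V^2
  have hTrV2 : Matrix.trace (V * V)
      = Matrix.trace (VIn ![r₁, r₂] * VIn ![r₁, r₂]) := by
    rw [hVdef]
    have h1 : K * VIn ![r₁, r₂] * Kᵀ * (K * VIn ![r₁, r₂] * Kᵀ)
        = K * (VIn ![r₁, r₂] * (Kᵀ * K) * VIn ![r₁, r₂]) * Kᵀ := by
      simp only [Matrix.mul_assoc]
    rw [h1, hKorth, Matrix.mul_one, Matrix.trace_mul_cycle, ← Matrix.mul_assoc,
      hKorth, Matrix.one_mul]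
  have hexp : ∀ r : ℝ,
      Real.exp (-(2 * r)) * Real.exp (-(2 * r)) + Real.exp (2 * r) * Real.exp (2 * r)
        = 2 * Hsqz (Real.sinh r ^ 2) + 2 := by
    intro r
    have hu : Real.exp r ≠ 0 := (Real.exp_pos r).ne'
    have h1 : Real.exp (-(2 * r)) = (Real.exp r)⁻¹ * (Real.exp r)⁻¹ := by
      rw [← Real.exp_neg, ← Real.exp_add]; ring_nf
    have h2 : Real.exp (2 * r) = Real.exp r * Real.exp r := by
      rw [← Real.exp_add]; ring_nf
    rw [h1, h2, Real.sinh_eq, Real.exp_neg, Hsqz]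
    field_simp
    ring
  have hDtr : Matrix.trace (VIn ![r₁, r₂] * VIn ![r₁, r₂])
      = 2 * Hsqz (Real.sinh r₁ ^ 2) + 2 * Hsqz (Real.sinh r₂ ^ 2) + 4 := by
    have e1 := hexp r₁
    have e2 := hexp r₂
    simp [VIn, Matrix.trace, Matrix.diag, Matrix.mul_apply, Matrix.diagonal,
      Fintype.sum_prod_type, Fin.sum_univ_two]
    linarith [e1, e2]
  have key : Matrix.trace (V * V)
      = 2 * Hsqz (Real.sinh r₁ ^ 2) + 2 * Hsqz (Real.sinh r₂ ^ 2) + 4 :=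
    hTrV2.trans hDtr
  -- entrywise equations
  have e1 := congrFun (congrFun hVOV ((0 : Fin 2), (0 : Fin 2))) ((0 : Fin 2), (1 : Fin 2))
  have e2 := congrFun (congrFun hVOV ((1 : Fin 2), (0 : Fin 2))) ((1 : Fin 2), (1 : Fin 2))
  simp only [Omega, Matrix.mul_apply, Fintype.sum_prod_type, Fin.sum_univ_two] at e1 e2
  simp [Prod.ext_iff] at e1 e2
  -- symmetry instances for canonicalisation
  have s1 : V ((0 : Fin 2), (1 : Fin 2)) ((0 : Fin 2), (0 : Fin 2))
      = V ((0 : Fin 2), (0 : Fin 2)) ((0 : Fin 2), (1 : Fin 2)) := hsymf _ _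
  have s2 : V ((1 : Fin 2), (0 : Fin 2)) ((0 : Fin 2), (0 : Fin 2))
      = V ((0 : Fin 2), (0 : Fin 2)) ((1 : Fin 2), (0 : Fin 2)) := hsymf _ _
  have s3 : V ((1 : Fin 2), (1 : Fin 2)) ((0 : Fin 2), (0 : Fin 2))
      = V ((0 : Fin 2), (0 : Fin 2)) ((1 : Fin 2), (1 : Fin 2)) := hsymf _ _
  have s4 : V ((1 : Fin 2), (0 : Fin 2)) ((0 : Fin 2), (1 : Fin 2))
      = V ((0 : Fin 2), (1 : Fin 2)) ((1 : Fin 2), (0 : Fin 2)) := hsymf _ _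
  have s5 : V ((1 : Fin 2), (1 : Fin 2)) ((0 : Fin 2), (1 : Fin 2))
      = V ((0 : Fin 2), (1 : Fin 2)) ((1 : Fin 2), (1 : Fin 2)) := hsymf _ _
  have s6 : V ((1 : Fin 2), (1 : Fin 2)) ((1 : Fin 2), (0 : Fin 2))
      = V ((1 : Fin 2), (0 : Fin 2)) ((1 : Fin 2), (1 : Fin 2)) := hsymf _ _
  simp only [Prod.mk_zero_zero, Prod.mk_one_one] at s1 s2 s3 s4 s5 s6
  -- express trace (V*V) entrywise in key
  simp [Matrix.trace, Matrix.diag, Matrix.mul_apply, Fintype.sum_prod_type,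
    Fin.sum_univ_two, Hsqz] at key
  -- final expansion of the goal
  simp [qfi, Gmat, Hsqz, photon, dblock, Matrix.trace, Matrix.diag, pow_two,
    Matrix.mul_apply, Fintype.sum_prod_type, Fin.sum_univ_two, Matrix.diagonal,
    Matrix.det_fin_two]
  simp only [Prod.mk_zero_zero, Prod.mk_one_one, s1, s2, s3, s4, s5, s6] at e1 e2 key ⊢
  linear_combination (g₁ * g₂ / 2) * key + (g₁ * g₂ - g₂ ^ 2) * e2 - (g₁ * g₂ - g₂ ^ 2) * e1
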